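/- Let W_λ be a unilateral weighted shift in ℓ²(ℕ) that is C-symmetric with respect to a conjugation C satisfying C eₙ ∈ dom(W_λ) for all n. Then the set Λ₀ = {i ∈ ℕ : λᵢ = 0} is infinite. -/

import Mathlib

open InnerProductSpace in
/-- A conjugation on a complex inner product space: an antilinear involution
satisfying `⟪Cf, Cg⟫ = ⟪g, f⟫`. -/
structure Conjugation (H : Type*) [NormedAddCommGroup H] [InnerProductSpace ℂ H] where
  toFun : H → H
  map_add' : ∀ x y, toFun (x + y) = toFun x + toFun y
  map_smul' : ∀ (c : ℂ) (x : H), toFun (c • x) = (starRingEnd ℂ c) • toFun x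
  invol : ∀ x, toFun (toFun x) = x
  inner_map : ∀ x y, (inner ℂ (toFun x) (toFun y) : ℂ) = inner ℂ y x

/-- `T` is `C`-symmetric: `T ⊆ C T* C`. -/
noncomputable def CSymmetric {H : Type*} [NormedAddCommGroup H] [InnerProductSpace ℂ H]
    [CompleteSpace H] (C : Conjugation H) (T : H →ₗ.[ℂ] H) : Prop :=
  ∀ x : T.domain, ∃ hx : C.toFun x ∈ T.adjoint.domain,
    C.toFun (T.adjoint ⟨C.toFun x, hx⟩) = T x

/-- `T` is `C`-selfadjoint: `T = C T* C`. -/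
noncomputable def CSelfAdjoint {H : Type*} [NormedAddCommGroup H] [InnerProductSpace ℂ H]
    [CompleteSpace H] (C : Conjugation H) (T : H →ₗ.[ℂ] H) : Prop :=
  CSymmetric C T ∧ ∀ y : H, C.toFun y ∈ T.adjoint.domain → y ∈ T.domain

/-- Composition of partially defined linear maps, with its natural (maximal) domain. -/
noncomputable def LinearPMap.pcomp {R E F G : Type*} [Ring R] [AddCommGroup E] [Module R E]
    [AddCommGroup F] [Module R F] [AddCommGroup G] [Module R G]
    (g : F →ₗ.[R] G) (f : E →ₗ.[R] F) : E →ₗ.[R] G :=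
  g.comp (f.domRestrict ((g.domain.comap f.toFun).map f.domain.subtype))
    (by
      intro z
      obtain ⟨y, hy, hyx⟩ := z.2.1
      erw [LinearPMap.domRestrict_apply (y := y) (by exact hyx.symm)]
      exact hy)

/-- Natural powers of a partially defined linear map, `T^(n+1) = T ∘ T^n`, with
`T^0` the identity on the whole space. -/
noncomputable def LinearPMap.ppow {R E : Type*} [Ring R] [AddCommGroup E] [Module R E]
    (T : E →ₗ.[R] E) : ℕ → E →ₗ.[R] E
  | 0 => ⟨⊤, (⊤ : Submodule R E).subtype⟩
  | n + 1 => T.pcomp (T.ppow n)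

/-- `W` is the unilateral weighted shift in `ℓ²(ℕ)` with weights `lam` (0-indexed:
`W eₙ = lam n • e_{n+1}`): it has the maximal domain
`{f : Σ |lam n * f n|² < ∞}` and acts by `(W f)(n+1) = lam n * f n`, `(W f)(0) = 0`. -/
def IsWeightedShift (lam : ℕ → ℂ) (W : lp (fun _ : ℕ => ℂ) 2 →ₗ.[ℂ] lp (fun _ : ℕ => ℂ) 2) :
    Prop :=
  (∀ f : lp (fun _ : ℕ => ℂ) 2, f ∈ W.domain ↔ Memℓp (fun n => lam n * f n) 2) ∧
  (∀ f : W.domain, (W f : lp (fun _ : ℕ => ℂ) 2) 0 = 0 ∧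
    ∀ n : ℕ, (W f : lp (fun _ : ℕ => ℂ) 2) (n + 1) = lam n * (f : lp (fun _ : ℕ => ℂ) 2) n)

/-- The canonical orthonormal basis of `ℓ²(ℕ)` (0-indexed). -/
noncomputable def e (n : ℕ) : lp (fun _ : ℕ => ℂ) 2 := lp.single 2 n 1

/-- if a unilateral weighted shift `W_λ` is `C`-symmetric with
`C eₙ ∈ dom W_λ` for all `n`, then `Λ₀ = {i : λᵢ = 0}` is infinite. -/
theorem stmt_15 (lam : ℕ → ℂ)
    (W : lp (fun _ : ℕ => ℂ) 2 →ₗ.[ℂ] lp (fun _ : ℕ => ℂ) 2)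
    (hW : IsWeightedShift lam W)
    (C : Conjugation (lp (fun _ : ℕ => ℂ) 2)) (hsym : CSymmetric C W)
    (hdom : ∀ n : ℕ, C.toFun (e n) ∈ W.domain) :
    {i : ℕ | lam i = 0}.Infinite := by
  classical
  -- Coordinates via inner ℂ products with the basis vectors
  have coord : ∀ (v : lp (fun _ : ℕ => ℂ) 2) (n : ℕ), (inner ℂ (e n) v : ℂ) = v n := by
    intro v n
    rw [e, lp.inner_single_left]
    simp [RCLike.inner_apply]
  -- Swap lemma for the conjugation
  have hswap : ∀ x y : lp (fun _ : ℕ => ℂ) 2,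
      (inner ℂ (C.toFun x) y : ℂ) = inner ℂ (C.toFun y) x := by
    intro x y
    conv_lhs => rw [← C.invol y]
    exact C.inner_map x (C.toFun y)
  -- the "matrix" of C is symmetric
  have hCsymm : ∀ m n : ℕ, (C.toFun (e n)) m = (C.toFun (e m)) n := by
    intro m n
    rw [← coord (C.toFun (e n)) m, ← coord (C.toFun (e m)) n]
    rw [← inner_conj_symm (e m) (C.toFun (e n)), hswap (e n) (e m), inner_conj_symm]
  -- basis vectors lie in the domain of W
  have hsingle_mem : ∀ (i : ℕ) (c : ℂ), lp.single 2 i c ∈ W.domain := by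
    intro i c
    rw [hW.1]
    have hfun : (fun k => lam k * (lp.single 2 i c : lp (fun _ : ℕ => ℂ) 2) k)
        = (lam i * c) • ((e i : lp (fun _ : ℕ => ℂ) 2) : ∀ _ : ℕ, ℂ) := by
      funext k
      by_cases hk : k = i
      · subst hk
        simp [e, lp.single_apply_self, Pi.smul_apply, smul_eq_mul]
      · simp [e, lp.single_apply_ne 2 i _ hk, Pi.smul_apply, smul_eq_mul, Pi.single_apply, hk]
    rw [hfun]
    exact (lp.memℓp (e i)).const_smul (lam i * c)
  -- the domain of W is dense
  have hdense : Dense (W.domain : Set (lp (fun _ : ℕ => ℂ) 2)) := by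
    intro f
    have hsum := lp.hasSum_single (E := fun _ : ℕ => ℂ) (p := 2) (by norm_num) f
    exact mem_closure_of_tendsto hsum
      (Filter.Eventually.of_forall fun s =>
        Submodule.sum_mem _ fun i _ => hsingle_mem i (f i))
  have hadj := LinearPMap.adjoint_isFormalAdjoint hdense
  -- the key coordinate identities
  have key : ∀ m : ℕ,
      lam m * (C.toFun (e m)) 0 = 0 ∧
      ∀ j : ℕ, lam m * (C.toFun (e m)) (j + 1) = lam j * (C.toFun (e (m + 1))) j := by
    intro m
    set x : W.domain := ⟨C.toFun (e (m + 1)), hdom (m + 1)⟩ with hxdef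
    obtain ⟨hx, heq⟩ := hsym x
    set u : lp (fun _ : ℕ => ℂ) 2 := W.adjoint ⟨C.toFun (x : lp (fun _ : ℕ => ℂ) 2), hx⟩
      with hudef
    -- heq : C.toFun u = W x
    have hCx : C.toFun (x : lp (fun _ : ℕ => ℂ) 2) = e (m + 1) := C.invol _
    have hg : ∀ n : ℕ, (W x : lp (fun _ : ℕ => ℂ) 2) n = lam m * (C.toFun (e m)) n := by
      intro n
      have h1 : (inner ℂ (e n) (W x : lp (fun _ : ℕ => ℂ) 2) : ℂ)
          = inner ℂ (e n) (C.toFun u) := by rw [heq]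
      have h2 : (inner ℂ (e n) (C.toFun u) : ℂ)
          = starRingEnd ℂ (inner ℂ (C.toFun (e n)) u : ℂ) := by
        rw [← inner_conj_symm (e n) (C.toFun u), hswap u (e n)]
      have h3 : (inner ℂ (C.toFun (e n)) u : ℂ) = starRingEnd ℂ (inner ℂ u (C.toFun (e n)) : ℂ) := by
        rw [inner_conj_symm]
      have h4 : (inner ℂ u (C.toFun (e n)) : ℂ)
          = inner ℂ (C.toFun (x : lp (fun _ : ℕ => ℂ) 2))
              (W ⟨C.toFun (e n), hdom n⟩ : lp (fun _ : ℕ => ℂ) 2) :=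
        hadj ⟨C.toFun (x : lp (fun _ : ℕ => ℂ) 2), hx⟩ ⟨C.toFun (e n), hdom n⟩
      have h5 : (inner ℂ (C.toFun (x : lp (fun _ : ℕ => ℂ) 2))
            (W ⟨C.toFun (e n), hdom n⟩ : lp (fun _ : ℕ => ℂ) 2) : ℂ)
          = lam m * (C.toFun (e n)) m := by
        rw [hCx, coord]
        exact (hW.2 ⟨C.toFun (e n), hdom n⟩).2 m
      have := h1.trans (h2.trans (by rw [h3, starRingEnd_self_apply, h4, h5]))
      rw [coord] at this
      rw [this, hCsymm m n]
    have hW2 := hW.2 x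
    constructor
    · have h0 := hW2.1
      rw [hg 0] at h0
      exact h0
    · intro j
      have hj := hW2.2 j
      rw [hg (j + 1)] at hj
      exact hj
  -- now suppose the zero set is finite
  intro hfin
  obtain ⟨B, hB⟩ := hfin.bddAbove
  have hN : ∀ m : ℕ, B + 1 ≤ m → lam m ≠ 0 := by
    intro m hm h0
    have : m ≤ B := hB h0
    omega
  -- all coordinates of C eₘ vanish for m ≥ B + 1
  have hvanish : ∀ j : ℕ, ∀ m : ℕ, B + 1 ≤ m → (C.toFun (e m)) j = 0 := by
    intro j
    induction j with
    | zero =>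
      intro m hm
      have h0 := (key m).1
      exact (mul_eq_zero.mp h0).resolve_left (hN m hm)
    | succ j ih =>
      intro m hm
      have h1 := (key m).2 j
      rw [ih (m + 1) (by omega), mul_zero] at h1
      exact (mul_eq_zero.mp h1).resolve_left (hN m hm)
  -- hence C e_{B+1} = 0, contradicting ‖C e_{B+1}‖ = 1
  have hzero : C.toFun (e (B + 1)) = 0 :=
    lp.ext (funext fun j => hvanish j (B + 1) le_rfl)
  have hone : (inner ℂ (C.toFun (e (B + 1))) (C.toFun (e (B + 1))) : ℂ) = 1 := by
    rw [C.inner_map, e, lp.inner_single_left, lp.single_apply_self]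
    simp [RCLike.inner_apply]
  rw [hzero, inner_zero_left] at hone
  exact zero_ne_one hone
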